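/- For m a positive half-integer, s a half-integer, a a positive integer, one has Φ₂^{[m,s]}(τ,z₁,z₂,0) − Φ₂^{[m,s+a]}(τ,z₁,z₂,0) = Σ_{k=0}^{a−1} e^{πi(s+k)(z₁−z₂)} q^{−(s+k)²/(4m)} θ_{−(s+k),m}(τ, z₁+z₂), where the series are taken at points where the denominators do not vanish. -/

import Mathlib

open Real Complex Filter Topology

noncomputable section

noncomputable def Phi1 (m s : ℝ) (τ z1 z2 t : ℂ) : ℂ :=
  Complex.exp (-2*(π:ℂ)*Complex.I*(m:ℂ)*t) *
    ∑' j : ℤ,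
      Complex.exp (2*(π:ℂ)*Complex.I*((m:ℂ)*(j:ℂ)*(z1+z2) + (s:ℂ)*z1)) *
        Complex.exp (2*(π:ℂ)*Complex.I*τ*((m:ℂ)*(j:ℂ)^2 + (s:ℂ)*(j:ℂ))) /
        (1 - Complex.exp (2*(π:ℂ)*Complex.I*z1) * Complex.exp (2*(π:ℂ)*Complex.I*τ) ^ j)

noncomputable def Phi2 (m s : ℝ) (τ z1 z2 t : ℂ) : ℂ :=
  Complex.exp (-2*(π:ℂ)*Complex.I*(m:ℂ)*t) *
    ∑' j : ℤ,
      Complex.exp (-(2*(π:ℂ)*Complex.I)*((m:ℂ)*(j:ℂ)*(z1+z2) + (s:ℂ)*z2)) *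
        Complex.exp (2*(π:ℂ)*Complex.I*τ*((m:ℂ)*(j:ℂ)^2 + (s:ℂ)*(j:ℂ))) /
        (1 - Complex.exp (-(2*(π:ℂ)*Complex.I)*z2) * Complex.exp (2*(π:ℂ)*Complex.I*τ) ^ j)

noncomputable def Phi (m s : ℝ) (τ z1 z2 t : ℂ) : ℂ :=
  Phi1 m s τ z1 z2 t - Phi2 m s τ z1 z2 t

noncomputable def jacobiThetaKM (k m : ℝ) (τ z : ℂ) : ℂ :=
  ∑' j : ℤ,
    Complex.exp (2*(π:ℂ)*Complex.I*(m:ℂ)*((j:ℂ) + (k:ℂ)/(2*(m:ℂ)))*z) *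
      Complex.exp (2*(π:ℂ)*Complex.I*τ*(m:ℂ)*((j:ℂ) + (k:ℂ)/(2*(m:ℂ)))^2)


lemma denom_lb (τ z2 : ℂ) (hτ : 0 < τ.im)
    (hden : ∀ j : ℤ, Complex.exp (-(2*(π:ℂ)*Complex.I)*z2) * Complex.exp (2*(π:ℂ)*Complex.I*τ) ^ j ≠ 1) :
    ∃ ε > 0, ∀ j : ℤ,
      ε ≤ ‖1 - Complex.exp (-(2*(π:ℂ)*Complex.I)*z2) * Complex.exp (2*(π:ℂ)*Complex.I*τ) ^ j‖ := by
  set w := Complex.exp (-(2*(π:ℂ)*Complex.I)*z2) with hw_def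
  set Q := Complex.exp (2*(π:ℂ)*Complex.I*τ) with hQ_def
  have hwpos : 0 < ‖w‖ := norm_pos_iff.mpr (Complex.exp_ne_zero _)
  have hQpos : 0 < ‖Q‖ := norm_pos_iff.mpr (Complex.exp_ne_zero _)
  have hQlt : ‖Q‖ < 1 := by
    rw [hQ_def, Complex.norm_exp]
    have h : (2*(π:ℂ)*Complex.I*τ).re = -(2*π*τ.im) := by
      simp [Complex.mul_re, Complex.mul_im]
    rw [h]
    exact Real.exp_lt_one_iff.mpr (by nlinarith [Real.pi_pos])
  obtain ⟨N, hN⟩ : ∃ n : ℕ, ‖Q‖ ^ n < (1/2) / ‖w‖ :=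
    exists_pow_lt_of_lt_one (by positivity) hQlt
  obtain ⟨M, hM⟩ : ∃ n : ℕ, ‖Q‖ ^ n < ‖w‖ / 2 :=
    exists_pow_lt_of_lt_one (by positivity) hQlt
  have hFne : (Finset.Icc (-(M:ℤ)) (N:ℤ)).Nonempty :=
    ⟨0, Finset.mem_Icc.mpr ⟨by simp, by simp⟩⟩
  refine ⟨min (1/2) ((Finset.Icc (-(M:ℤ)) (N:ℤ)).inf' hFne fun j => ‖1 - w * Q ^ j‖), ?_, ?_⟩
  · refine lt_min (by norm_num) ?_
    rw [Finset.lt_inf'_iff]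
    intro j _
    exact norm_pos_iff.mpr (sub_ne_zero.mpr (hden j).symm)
  · intro j
    by_cases hj : j ∈ Finset.Icc (-(M:ℤ)) (N:ℤ)
    · exact (min_le_right _ _).trans (Finset.inf'_le _ hj)
    · refine (min_le_left _ _).trans ?_
      rw [Finset.mem_Icc, not_and_or, not_le, not_le] at hj
      rcases hj with hj | hj
      · -- j < -M : |wQ^j| ≥ 2
        have h1 : ‖Q‖ ^ (-(M:ℤ)) ≤ ‖Q‖ ^ j :=
          zpow_le_zpow_right_of_le_one₀ hQpos hQlt.le hj.le
        have key : (2:ℝ) < ‖w‖ * ‖Q‖ ^ (-(M:ℤ)) := by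
          rw [zpow_neg, zpow_natCast]
          have := (lt_div_iff₀ (pow_pos hQpos M)).mpr (by linarith : 2 * ‖Q‖^M < ‖w‖)
          simpa [div_eq_mul_inv] using this
        have h2 : (2:ℝ) < ‖w‖ * ‖Q‖ ^ j :=
          key.trans_le (mul_le_mul_of_nonneg_left h1 hwpos.le)
        have h3 : ‖1 - w * Q ^ j‖ ≥ ‖w * Q ^ j‖ - 1 := by
          have := norm_sub_norm_le (w * Q ^ j) 1
          simpa [norm_sub_rev] using this
        rw [norm_mul, norm_zpow] at h3
        linarith
      · -- N < j
        have h1 : ‖Q‖ ^ j ≤ ‖Q‖ ^ (N:ℤ) :=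
          zpow_le_zpow_right_of_le_one₀ hQpos hQlt.le hj.le
        have h2 : ‖w‖ * ‖Q‖ ^ j < 1/2 := by
          calc ‖w‖ * ‖Q‖ ^ j ≤ ‖w‖ * ‖Q‖ ^ (N:ℤ) :=
                mul_le_mul_of_nonneg_left h1 hwpos.le
            _ < 1/2 := by
                rw [zpow_natCast]
                calc ‖w‖ * ‖Q‖ ^ N < ‖w‖ * ((1/2)/‖w‖) :=
                      mul_lt_mul_of_pos_left hN hwpos
                  _ = 1/2 := by rw [mul_comm, div_mul_cancel₀ _ (ne_of_gt hwpos)]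
        have h3 : (1:ℝ) - ‖w * Q ^ j‖ ≤ ‖1 - w * Q ^ j‖ := by
          simpa using norm_sub_norm_le (1:ℂ) (w * Q ^ j)
        rw [norm_mul, norm_zpow] at h3
        linarith

lemma summN (m s' : ℝ) (hm : 0 < m) (τ z1 z2 : ℂ) (hτ : 0 < τ.im) :
    Summable (fun j : ℤ =>
      Complex.exp (-(2*(π:ℂ)*Complex.I)*((m:ℂ)*(j:ℂ)*(z1+z2) + (s':ℂ)*z2)) *
        Complex.exp (2*(π:ℂ)*Complex.I*τ*((m:ℂ)*(j:ℂ)^2 + (s':ℂ)*(j:ℂ)))) := by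
  have h : Summable (jacobiTheta₂_term · ((s':ℂ)*τ - (m:ℂ)*(z1+z2)) (2*(m:ℂ)*τ)) := by
    rw [summable_jacobiTheta₂_term_iff]
    have h2 : (2*(m:ℂ)*τ) = ((2*m:ℝ):ℂ)*τ := by push_cast; ring
    rw [h2, Complex.im_ofReal_mul]
    positivity
  refine (h.mul_left (Complex.exp (-(2*(π:ℂ)*Complex.I)*((s':ℂ)*z2)))).congr fun j => ?_
  rw [jacobiTheta₂_term, ← Complex.exp_add, ← Complex.exp_add]
  congr 1
  ring

lemma summA (m s' : ℝ) (hm : 0 < m) (τ z1 z2 : ℂ) (hτ : 0 < τ.im)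
    (hden : ∀ j : ℤ, Complex.exp (-(2*(π:ℂ)*Complex.I)*z2) * Complex.exp (2*(π:ℂ)*Complex.I*τ) ^ j ≠ 1) :
    Summable (fun j : ℤ =>
      Complex.exp (-(2*(π:ℂ)*Complex.I)*((m:ℂ)*(j:ℂ)*(z1+z2) + (s':ℂ)*z2)) *
        Complex.exp (2*(π:ℂ)*Complex.I*τ*((m:ℂ)*(j:ℂ)^2 + (s':ℂ)*(j:ℂ))) /
        (1 - Complex.exp (-(2*(π:ℂ)*Complex.I)*z2) * Complex.exp (2*(π:ℂ)*Complex.I*τ) ^ j)) := by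
  obtain ⟨ε, hε, hle⟩ := denom_lb τ z2 hτ hden
  refine Summable.of_norm_bounded (g :=
    fun j => ε⁻¹ * ‖Complex.exp (-(2*(π:ℂ)*Complex.I)*((m:ℂ)*(j:ℂ)*(z1+z2) + (s':ℂ)*z2)) *
        Complex.exp (2*(π:ℂ)*Complex.I*τ*((m:ℂ)*(j:ℂ)^2 + (s':ℂ)*(j:ℂ)))‖)
    ((summable_norm_iff.mpr (summN m s' hm τ z1 z2 hτ)).mul_left ε⁻¹) fun j => ?_
  rw [norm_div]
  calc ‖_‖ / ‖(1 - Complex.exp (-(2*(π:ℂ)*Complex.I)*z2) * Complex.exp (2*(π:ℂ)*Complex.I*τ) ^ j)‖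
      ≤ ‖_‖ / ε := div_le_div_of_nonneg_left (norm_nonneg _) hε (hle j)
    _ = ε⁻¹ * ‖_‖ := by rw [div_eq_mul_inv, mul_comm]

lemma step (m s' : ℝ) (hm : 0 < m) (τ z1 z2 : ℂ) (hτ : 0 < τ.im)
    (hden : ∀ j : ℤ, Complex.exp (-(2*(π:ℂ)*Complex.I)*z2) * Complex.exp (2*(π:ℂ)*Complex.I*τ) ^ j ≠ 1) :
    Phi2 m s' τ z1 z2 0 - Phi2 m (s'+1) τ z1 z2 0 =
      Complex.exp ((π:ℂ)*Complex.I*(s':ℂ)*(z1-z2)) *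
        Complex.exp (2*(π:ℂ)*Complex.I*τ*((-(s'^2)/(4*m) : ℝ) : ℂ)) *
        jacobiThetaKM (-s') m τ (z1+z2) := by
  have hm0 : (m:ℂ) ≠ 0 := Complex.ofReal_ne_zero.mpr hm.ne'
  have hNsum := summN m s' hm τ z1 z2 hτ
  have hA'sum := summA m (s'+1) hm τ z1 z2 hτ hden
  have hpt : ∀ j : ℤ,
      Complex.exp (-(2*(π:ℂ)*Complex.I)*((m:ℂ)*(j:ℂ)*(z1+z2) + (s':ℂ)*z2)) *
        Complex.exp (2*(π:ℂ)*Complex.I*τ*((m:ℂ)*(j:ℂ)^2 + (s':ℂ)*(j:ℂ))) /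
        (1 - Complex.exp (-(2*(π:ℂ)*Complex.I)*z2) * Complex.exp (2*(π:ℂ)*Complex.I*τ) ^ j) =
      Complex.exp (-(2*(π:ℂ)*Complex.I)*((m:ℂ)*(j:ℂ)*(z1+z2) + ((s'+1:ℝ):ℂ)*z2)) *
        Complex.exp (2*(π:ℂ)*Complex.I*τ*((m:ℂ)*(j:ℂ)^2 + ((s'+1:ℝ):ℂ)*(j:ℂ))) /
        (1 - Complex.exp (-(2*(π:ℂ)*Complex.I)*z2) * Complex.exp (2*(π:ℂ)*Complex.I*τ) ^ j) +
      Complex.exp (-(2*(π:ℂ)*Complex.I)*((m:ℂ)*(j:ℂ)*(z1+z2) + (s':ℂ)*z2)) *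
        Complex.exp (2*(π:ℂ)*Complex.I*τ*((m:ℂ)*(j:ℂ)^2 + (s':ℂ)*(j:ℂ))) := by
    intro j
    have hD : (1 - Complex.exp (-(2*(π:ℂ)*Complex.I)*z2) * Complex.exp (2*(π:ℂ)*Complex.I*τ) ^ j) ≠ 0 :=
      sub_ne_zero.mpr (hden j).symm
    have hQj : Complex.exp (2*(π:ℂ)*Complex.I*τ) ^ j = Complex.exp ((j:ℂ) * (2*(π:ℂ)*Complex.I*τ)) :=
      (Complex.exp_int_mul _ j).symm
    have hnum : Complex.exp (-(2*(π:ℂ)*Complex.I)*((m:ℂ)*(j:ℂ)*(z1+z2) + ((s'+1:ℝ):ℂ)*z2)) *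
        Complex.exp (2*(π:ℂ)*Complex.I*τ*((m:ℂ)*(j:ℂ)^2 + ((s'+1:ℝ):ℂ)*(j:ℂ))) =
        Complex.exp (-(2*(π:ℂ)*Complex.I)*((m:ℂ)*(j:ℂ)*(z1+z2) + (s':ℂ)*z2)) *
          Complex.exp (2*(π:ℂ)*Complex.I*τ*((m:ℂ)*(j:ℂ)^2 + (s':ℂ)*(j:ℂ))) *
          (Complex.exp (-(2*(π:ℂ)*Complex.I)*z2) * Complex.exp (2*(π:ℂ)*Complex.I*τ) ^ j) := by
      rw [hQj]
      simp only [← Complex.exp_add]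
      congr 1
      push_cast
      ring
    rw [hnum, div_add' _ _ _ hD, div_eq_div_iff hD hD]
    ring
  rw [Phi2, Phi2]
  simp only [mul_zero, Complex.exp_zero, one_mul]
  rw [tsum_congr hpt, Summable.tsum_add hA'sum hNsum, add_sub_cancel_left]
  rw [jacobiThetaKM, ← tsum_mul_left]
  rw [← (Equiv.neg ℤ).tsum_eq]
  refine tsum_congr fun j => ?_
  simp only [Equiv.neg_apply, Int.cast_neg]
  simp only [← Complex.exp_add]
  congr 1
  push_cast
  field_simp
  ring


theorem stmt1 (m s : ℝ) (hm : ∃ n : ℕ, 0 < n ∧ m = (n : ℝ) / 2)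
    (hs : ∃ k : ℤ, s = (k : ℝ) / 2) (a : ℕ) (ha : 0 < a)
    (τ z1 z2 : ℂ) (hτ : 0 < τ.im)
    (hden : ∀ j : ℤ, Complex.exp (-(2*(π:ℂ)*Complex.I)*z2) * Complex.exp (2*(π:ℂ)*Complex.I*τ) ^ j ≠ 1) :
    Phi2 m s τ z1 z2 0 - Phi2 m (s + a) τ z1 z2 0 =
      ∑ k ∈ Finset.range a,
        Complex.exp ((π:ℂ)*Complex.I*((s:ℂ)+(k:ℂ))*(z1-z2)) *
          Complex.exp (2*(π:ℂ)*Complex.I*τ*((-((s+(k:ℝ))^2)/(4*m) : ℝ) : ℂ)) *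
          jacobiThetaKM (-(s + k)) m τ (z1+z2) := by
  obtain ⟨n, hn, hmn⟩ := hm
  have hmpos : 0 < m := by rw [hmn]; positivity
  have h0 : Phi2 m s τ z1 z2 0 - Phi2 m (s + a) τ z1 z2 0 =
      ∑ k ∈ Finset.range a,
        (Phi2 m (s + k) τ z1 z2 0 - Phi2 m (s + ((k+1:ℕ):ℝ)) τ z1 z2 0) := by
    rw [Finset.sum_range_sub' (fun k : ℕ => Phi2 m (s + k) τ z1 z2 0) a]
    norm_num
  rw [h0]
  refine Finset.sum_congr rfl fun k _ => ?_
  have harg : s + ((k+1:ℕ):ℝ) = (s + k) + 1 := by push_cast; ring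
  rw [harg, step m (s + k) hmpos τ z1 z2 hτ hden]
  norm_cast

end
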